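/- arXiv:1601.00207 — 2 statements merged into one kernel-verified Lean document; each statement's English description precedes it below -/
import Mathlib

section
/- Suppose 1 ∈ U and U contains elements u, v, w such that 1, u, v, w are pairwise non-±-equal. Then R(U) is dense in ℂ: for every x ∈ ℂ and every ε > 0 there exists z ∈ R(U) with |z − x| < ε. -/
open Complex

/-- The bracket `[x,y] = x * conj y - y * conj x`. -/
noncomputable def brkt (x y : ℂ) : ℂ := x * (starRingEnd ℂ) y - y * (starRingEnd ℂ) x

/-- `lineInt α β p q` is the intersection point `I_{α,β}(p,q)` of the line through `p`
with direction `α` and the line through `q` with direction `β` (for unit `α ≠ ±β`),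
given by the formula of Buhler et al. -/
noncomputable def lineInt (α β p q : ℂ) : ℂ :=
  brkt α p / brkt α β * β + brkt β q / brkt β α * α

/-- The sets `S n` in the inductive construction. -/
def stepSet (U : Set ℂ) : ℕ → Set ℂ
  | 0 => {0, 1}
  | n + 1 => {z | ∃ α ∈ U, ∃ β ∈ U, α ≠ β ∧ α ≠ -β ∧
      ∃ p ∈ stepSet U n, ∃ q ∈ stepSet U n, z = lineInt α β p q}

/-- `RU U = ⋃ n, S n`. -/
def RU (U : Set ℂ) : Set ℂ := ⋃ n, stepSet U n

/-- Elementary monomials of `U`. -/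
def IsElem (U : Set ℂ) (z : ℂ) : Prop :=
  ∃ α ∈ U, ∃ β ∈ U, α ≠ β ∧ α ≠ -β ∧ z = lineInt α β 0 1

/-- Monomials of `U`, defined inductively. -/
inductive IsMonomial (U : Set ℂ) : ℂ → Prop
  | elementary (α β : ℂ) (hα : α ∈ U) (hβ : β ∈ U) (h1 : α ≠ β) (h2 : α ≠ -β) :
      IsMonomial U (lineInt α β 0 1)
  | step (α β m : ℂ) (hα : α ∈ U) (hβ : β ∈ U) (h1 : α ≠ β) (h2 : α ≠ -β)
      (hm : IsMonomial U m) : IsMonomial U (lineInt α β 0 m)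

/-- `P`: the real numbers arising as length-two monomials `I_{γ,δ}(0,z)` on the real axis. -/
def projSet (U : Set ℂ) : Set ℝ :=
  {r | ∃ γ ∈ U, ∃ δ ∈ U, γ ≠ δ ∧ γ ≠ -δ ∧ ∃ z, IsElem U z ∧ (r : ℂ) = lineInt γ δ 0 z}

/-- `m` is a `ℤ[P]`-linear combination of elementary monomials of `U`. -/
def IsZPComb (U : Set ℂ) (m : ℂ) : Prop :=
  ∃ (n : ℕ) (c : Fin n → ℝ) (z : Fin n → ℂ),
    (∀ i, c i ∈ Subring.closure (projSet U)) ∧ (∀ i, IsElem U (z i)) ∧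
    m = ∑ i, (c i : ℂ) * z i

/-! ### Auxiliary algebraic lemmas about `brkt` and `lineInt` -/

lemma aux_brkt_anti (x y : ℂ) : brkt y x = - brkt x y := by simp only [brkt]; ring

lemma aux_brkt_self (x : ℂ) : brkt x x = 0 := by simp only [brkt]; ring

lemma aux_brkt_zero (x : ℂ) : brkt x 0 = 0 := by simp [brkt]

lemma aux_brkt_add (x y z : ℂ) : brkt x (y + z) = brkt x y + brkt x z := by
  simp only [brkt, map_add]; ring

lemma aux_brkt_neg (x y : ℂ) : brkt x (-y) = - brkt x y := by
  simp only [brkt, map_neg]; ring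

lemma aux_brkt_conj (x y : ℂ) : (starRingEnd ℂ) (brkt x y) = - brkt x y := by
  simp only [brkt, map_sub, map_mul, conj_conj]; ring

lemma aux_brkt_ratio_conj (s t u v : ℂ) :
    (starRingEnd ℂ) (brkt s t / brkt u v) = brkt s t / brkt u v := by
  rw [map_div₀, aux_brkt_conj, aux_brkt_conj, neg_div_neg_eq]

lemma aux_brkt_smul (x c y : ℂ) (hc : (starRingEnd ℂ) c = c) :
    brkt x (c * y) = c * brkt x y := by
  simp only [brkt, map_mul, hc]; ring

lemma aux_conj_unit {a : ℂ} (ha : ‖a‖ = 1) : a * (starRingEnd ℂ) a = 1 := by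
  rw [Complex.mul_conj]; norm_cast; simp [← Complex.sq_norm, ha]

lemma aux_brkt_ne {a b : ℂ} (ha : ‖a‖ = 1) (hb : ‖b‖ = 1)
    (h1 : a ≠ b) (h2 : a ≠ -b) : brkt a b ≠ 0 := by
  have ha' := aux_conj_unit ha
  have hb' := aux_conj_unit hb
  intro h
  have h0 : a * (starRingEnd ℂ) b = b * (starRingEnd ℂ) a := by
    have : a * (starRingEnd ℂ) b - b * (starRingEnd ℂ) a = 0 := by simpa [brkt] using h
    linear_combination this
  have hsq : (a * (starRingEnd ℂ) b) ^ 2 = 1 := by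
    calc (a * (starRingEnd ℂ) b) ^ 2 = (a * (starRingEnd ℂ) b) * (b * (starRingEnd ℂ) a) := by
          rw [← h0]; ring
      _ = (a * (starRingEnd ℂ) a) * (b * (starRingEnd ℂ) b) := by ring
      _ = 1 := by rw [ha', hb']; ring
  rcases sq_eq_one_iff.mp hsq with h' | h'
  · exact h1 (by linear_combination b * h' - a * hb')
  · exact h2 (by linear_combination b * h' - a * hb')

lemma aux_lineInt_eq {a b : ℂ} (p q z : ℂ) (h : brkt a b ≠ 0)
    (hp : brkt a p = brkt a z) (hq : brkt b q = brkt b z) :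
    lineInt a b p q = z := by
  have key : brkt a z * b - brkt b z * a = z * brkt a b := by simp only [brkt]; ring
  rw [lineInt, hp, hq, aux_brkt_anti a b, div_neg]
  field_simp
  linear_combination key

lemma aux_lineInt_self {a b : ℂ} (h : brkt a b ≠ 0) (z : ℂ) : lineInt a b z z = z :=
  aux_lineInt_eq z z z h rfl rfl

lemma aux_brkt_lineInt_left {a b : ℂ} (p q : ℂ) (h : brkt a b ≠ 0) :
    brkt a (lineInt a b p q) = brkt a p := by
  rw [lineInt, aux_brkt_add, aux_brkt_smul _ _ _ (aux_brkt_ratio_conj a p a b),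
    aux_brkt_smul _ _ _ (aux_brkt_ratio_conj b q b a), aux_brkt_self, mul_zero, add_zero,
    div_mul_cancel₀ _ h]

lemma aux_brkt_lineInt_right {a b : ℂ} (p q : ℂ) (h : brkt a b ≠ 0) :
    brkt b (lineInt a b p q) = brkt b q := by
  have h' : brkt b a ≠ 0 := by rw [aux_brkt_anti]; simpa using h
  rw [lineInt, aux_brkt_add, aux_brkt_smul _ _ _ (aux_brkt_ratio_conj a p a b),
    aux_brkt_smul _ _ _ (aux_brkt_ratio_conj b q b a), aux_brkt_self, mul_zero, zero_add,
    div_mul_cancel₀ _ h']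

lemma aux_lineInt_zero_q (x y p : ℂ) : lineInt x y p 0 = brkt x p / brkt x y * y := by
  simp [lineInt, aux_brkt_zero]

lemma aux_lineInt_zero_p (a b q : ℂ) : lineInt a b 0 q = brkt b q / brkt b a * a := by
  simp [lineInt, aux_brkt_zero]

lemma aux_lineInt_one_q (d z : ℂ) : lineInt 1 d 0 z = brkt d z / brkt d 1 := by
  simp [lineInt, aux_brkt_zero]

lemma aux_lineInt_smul (a b : ℂ) (k : ℝ) (z : ℂ) :
    lineInt a b 0 ((k : ℂ) * z) = (k : ℂ) * lineInt a b 0 z := by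
  rw [aux_lineInt_zero_p, aux_lineInt_zero_p,
    aux_brkt_smul _ _ _ (Complex.conj_ofReal k)]
  ring

/-- Addition construction. -/
lemma aux_add_constr {a b c : ℂ} (p q : ℂ) (hab : brkt a b ≠ 0) (hac : brkt a c ≠ 0)
    (hbc : brkt b c ≠ 0) :
    lineInt a b (lineInt c b (lineInt a b p 0) (lineInt a c q 0))
                (lineInt c a (lineInt b a p 0) (lineInt b c q 0)) = p + q := by
  have hba : brkt b a ≠ 0 := by rw [aux_brkt_anti]; simpa using hab
  have hca : brkt c a ≠ 0 := by rw [aux_brkt_anti]; simpa using hac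
  have hcb : brkt c b ≠ 0 := by rw [aux_brkt_anti]; simpa using hbc
  set X := lineInt a b p 0 with hX
  set Y := lineInt a c q 0 with hY
  set X' := lineInt b a p 0 with hX'
  set Y' := lineInt b c q 0 with hY'
  have hA : lineInt c b X Y = X + Y := by
    apply aux_lineInt_eq _ _ _ hcb
    · rw [aux_brkt_add, hY, aux_brkt_lineInt_right _ _ hac, aux_brkt_zero, add_zero]
    · rw [aux_brkt_add, hX, aux_brkt_lineInt_right _ _ hab, aux_brkt_zero, zero_add]
  have hB : lineInt c a X' Y' = X' + Y' := by
    apply aux_lineInt_eq _ _ _ hca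
    · rw [aux_brkt_add, hY', aux_brkt_lineInt_right _ _ hbc, aux_brkt_zero, add_zero]
    · rw [aux_brkt_add, hX', aux_brkt_lineInt_right _ _ hba, aux_brkt_zero, zero_add]
  rw [hA, hB]
  apply aux_lineInt_eq _ _ _ hab
  · rw [aux_brkt_add, aux_brkt_add, hX, hY, aux_brkt_lineInt_left _ _ hab,
      aux_brkt_lineInt_left _ _ hac]
  · rw [aux_brkt_add, aux_brkt_add, hX', hY', aux_brkt_lineInt_left _ _ hba,
      aux_brkt_lineInt_left _ _ hbc]

/-- Negation construction. -/
lemma aux_neg_constr {a b c : ℂ} (p : ℂ) (hab : brkt a b ≠ 0) (hac : brkt a c ≠ 0)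
    (hbc : brkt b c ≠ 0) :
    lineInt a b (lineInt c b (lineInt b a p 0) (lineInt c a p 0))
                (lineInt c a (lineInt a b p 0) (lineInt c b p 0)) = -p := by
  have hba : brkt b a ≠ 0 := by rw [aux_brkt_anti]; simpa using hab
  have hca : brkt c a ≠ 0 := by rw [aux_brkt_anti]; simpa using hac
  have hcb : brkt c b ≠ 0 := by rw [aux_brkt_anti]; simpa using hbc
  apply aux_lineInt_eq _ _ _ hab
  · rw [aux_brkt_neg, aux_lineInt_zero_q b a p, aux_lineInt_zero_q c a p, lineInt,
      aux_brkt_smul _ _ _ (aux_brkt_ratio_conj b p b a),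
      aux_brkt_smul _ _ _ (aux_brkt_ratio_conj c p c a),
      aux_brkt_add,
      aux_brkt_smul a _ b (by rw [map_div₀, map_mul, aux_brkt_ratio_conj, aux_brkt_conj,
        aux_brkt_conj, mul_neg, neg_div_neg_eq]),
      aux_brkt_smul a _ c (by rw [map_div₀, map_mul, aux_brkt_ratio_conj, aux_brkt_conj,
        aux_brkt_conj, mul_neg, neg_div_neg_eq])]
    field_simp
    simp only [brkt]
    ring
  · rw [aux_brkt_neg, aux_lineInt_zero_q a b p, aux_lineInt_zero_q c b p, lineInt,
      aux_brkt_smul _ _ _ (aux_brkt_ratio_conj a p a b),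
      aux_brkt_smul _ _ _ (aux_brkt_ratio_conj c p c b),
      aux_brkt_add,
      aux_brkt_smul b _ a (by rw [map_div₀, map_mul, aux_brkt_ratio_conj, aux_brkt_conj,
        aux_brkt_conj, mul_neg, neg_div_neg_eq]),
      aux_brkt_smul b _ c (by rw [map_div₀, map_mul, aux_brkt_ratio_conj, aux_brkt_conj,
        aux_brkt_conj, mul_neg, neg_div_neg_eq])]
    field_simp
    simp only [brkt]
    ring

lemma aux_tau_val (a b d : ℂ) :
    lineInt 1 d 0 (lineInt a b 0 1) = brkt b 1 / brkt b a * brkt d a / brkt d 1 := by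
  rw [aux_lineInt_zero_p a b 1, aux_lineInt_one_q,
    aux_brkt_smul _ _ _ (aux_brkt_ratio_conj b 1 b a), mul_div_assoc]

lemma aux_tau_real (a b d : ℂ) :
    (starRingEnd ℂ) (lineInt 1 d 0 (lineInt a b 0 1)) = lineInt 1 d 0 (lineInt a b 0 1) := by
  rw [aux_lineInt_one_q, aux_brkt_ratio_conj]

lemma aux_chain_smul (a b d : ℂ) (k : ℝ) :
    lineInt 1 d 0 (lineInt a b 0 (k : ℂ)) = (k : ℂ) * lineInt 1 d 0 (lineInt a b 0 1) := by
  have h1 : lineInt a b 0 ((k : ℂ)) = (k : ℂ) * lineInt a b 0 1 := by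
    simpa using aux_lineInt_smul a b k 1
  rw [h1, aux_lineInt_smul]

/-- Density of a subring of `ℝ` containing a non-integer element. -/
lemma aux_dense_subring (D : Subring ℝ) (ρ : ℝ) (hρ : ρ ∈ D) (hni : ∀ n : ℤ, ρ ≠ (n : ℝ)) :
    ∀ y ε : ℝ, 0 < ε → ∃ d ∈ D, |d - y| < ε := by
  set θ := Int.fract ρ with hθ
  have hθD : θ ∈ D := by
    rw [hθ, ← Int.self_sub_floor]
    exact sub_mem hρ (intCast_mem D ⌊ρ⌋)
  have hθ0 : 0 < θ := Int.fract_pos.mpr (fun h => hni ⌊ρ⌋ h)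
  have hθ1 : θ < 1 := Int.fract_lt_one ρ
  intro y ε hε
  obtain ⟨n, hn⟩ := exists_pow_lt_of_lt_one hε hθ1
  have hp0 : 0 < θ ^ n := pow_pos hθ0 n
  refine ⟨(⌊y / θ ^ n⌋ : ℝ) * θ ^ n, mul_mem (intCast_mem D ⌊y / θ ^ n⌋) (pow_mem hθD n), ?_⟩
  have hy : y = (y / θ ^ n) * θ ^ n := by field_simp
  have h1 : (⌊y / θ ^ n⌋ : ℝ) * θ ^ n - y = -(Int.fract (y / θ ^ n) * θ ^ n) := by
    rw [Int.fract]
    nth_rewrite 2 [hy]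
    ring
  rw [h1, abs_neg, _root_.abs_of_nonneg (mul_nonneg (Int.fract_nonneg _) hp0.le)]
  calc Int.fract (y / θ ^ n) * θ ^ n < 1 * θ ^ n :=
        mul_lt_mul_of_pos_right (Int.fract_lt_one _) hp0
    _ = θ ^ n := one_mul _
    _ < ε := hn

/-- if `1 ∈ U` and `U` contains `u, v, w` with `1, u, v, w` pairwise
non-±-equal, then `R(U)` is dense in `ℂ`. -/
theorem stmt14 (U : Set ℂ) (hU : ∀ z ∈ U, ‖z‖ = 1) (h1U : (1 : ℂ) ∈ U)
    (u v w : ℂ) (hu : u ∈ U) (hv : v ∈ U) (hw : w ∈ U)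
    (hu1 : u ≠ 1) (hu1' : u ≠ -1) (hv1 : v ≠ 1) (hv1' : v ≠ -1)
    (hw1 : w ≠ 1) (hw1' : w ≠ -1)
    (huv : u ≠ v) (huv' : u ≠ -v) (huw : u ≠ w) (huw' : u ≠ -w)
    (hvw : v ≠ w) (hvw' : v ≠ -w) :
    ∀ x : ℂ, ∀ ε : ℝ, 0 < ε → ∃ z ∈ RU U, ‖z - x‖ < ε := by
  intro x ε hε
  have nify : ∀ {a b : ℂ}, a ≠ -b → b ≠ -a := fun h he => h (by linear_combination he)
  have key : ∀ p q : ℂ, p ∈ U → q ∈ U → p ≠ q → p ≠ -q → brkt p q ≠ 0 :=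
    fun p q hp hq h1 h2 => aux_brkt_ne (hU p hp) (hU q hq) h1 h2
  have habs1 : (1:ℂ) ∈ U := h1U
  have B1u : brkt 1 u ≠ 0 := key 1 u h1U hu (Ne.symm hu1) (nify hu1')
  have Bu1 : brkt u 1 ≠ 0 := key u 1 hu h1U hu1 hu1'
  have B1v : brkt 1 v ≠ 0 := key 1 v h1U hv (Ne.symm hv1) (nify hv1')
  have Bv1 : brkt v 1 ≠ 0 := key v 1 hv h1U hv1 hv1'
  have B1w : brkt 1 w ≠ 0 := key 1 w h1U hw (Ne.symm hw1) (nify hw1')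
  have Bw1 : brkt w 1 ≠ 0 := key w 1 hw h1U hw1 hw1'
  have Buv : brkt u v ≠ 0 := key u v hu hv huv huv'
  have Bvu : brkt v u ≠ 0 := key v u hv hu (Ne.symm huv) (nify huv')
  have Buw : brkt u w ≠ 0 := key u w hu hw huw huw'
  have Bwu : brkt w u ≠ 0 := key w u hw hu (Ne.symm huw) (nify huw')
  have Bvw : brkt v w ≠ 0 := key v w hv hw hvw hvw'
  have Bwv : brkt w v ≠ 0 := key w v hw hv (Ne.symm hvw) (nify hvw')
  -- closure of RU under admissible intersections
  have hmono : ∀ n, stepSet U n ⊆ stepSet U (n+1) := by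
    intro n
    induction n with
    | zero =>
      intro z hz
      exact ⟨1, h1U, u, hu, Ne.symm hu1, nify hu1', z, hz, z, hz,
        (aux_lineInt_self B1u z).symm⟩
    | succ n ih =>
      rintro z ⟨α, hα, β, hβ, h1, h2, p, hp, q, hq, rfl⟩
      exact ⟨α, hα, β, hβ, h1, h2, p, ih hp, q, ih hq, rfl⟩
  have hle : ∀ {m N : ℕ}, m ≤ N → stepSet U m ⊆ stepSet U N := by
    intro m N h
    induction h with
    | refl => exact fun _ h => h
    | step _ ih => exact fun z hz => hmono _ (ih hz)
  have hclos : ∀ (α β : ℂ), α ∈ U → β ∈ U → α ≠ β → α ≠ -β → ∀ {p q : ℂ},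
      p ∈ RU U → q ∈ RU U → lineInt α β p q ∈ RU U := by
    intro α β hα hβ h1 h2 p q hp hq
    obtain ⟨m, hm⟩ := Set.mem_iUnion.mp hp
    obtain ⟨n, hn⟩ := Set.mem_iUnion.mp hq
    exact Set.mem_iUnion.mpr ⟨max m n + 1,
      ⟨α, hα, β, hβ, h1, h2, p, hle (le_max_left m n) hm, q, hle (le_max_right m n) hn, rfl⟩⟩
  have h0RU : (0:ℂ) ∈ RU U := Set.mem_iUnion.mpr ⟨0, Or.inl rfl⟩
  have h1RU : (1:ℂ) ∈ RU U := Set.mem_iUnion.mpr ⟨0, Or.inr rfl⟩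
  have C1u : ∀ {p q : ℂ}, p ∈ RU U → q ∈ RU U → lineInt 1 u p q ∈ RU U :=
    fun hp hq => hclos 1 u h1U hu (Ne.symm hu1) (nify hu1') hp hq
  have Cu1 : ∀ {p q : ℂ}, p ∈ RU U → q ∈ RU U → lineInt u 1 p q ∈ RU U :=
    fun hp hq => hclos u 1 hu h1U hu1 hu1' hp hq
  have C1v : ∀ {p q : ℂ}, p ∈ RU U → q ∈ RU U → lineInt 1 v p q ∈ RU U :=
    fun hp hq => hclos 1 v h1U hv (Ne.symm hv1) (nify hv1') hp hq
  have Cv1 : ∀ {p q : ℂ}, p ∈ RU U → q ∈ RU U → lineInt v 1 p q ∈ RU U :=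
    fun hp hq => hclos v 1 hv h1U hv1 hv1' hp hq
  have C1w : ∀ {p q : ℂ}, p ∈ RU U → q ∈ RU U → lineInt 1 w p q ∈ RU U :=
    fun hp hq => hclos 1 w h1U hw (Ne.symm hw1) (nify hw1') hp hq
  have Cw1 : ∀ {p q : ℂ}, p ∈ RU U → q ∈ RU U → lineInt w 1 p q ∈ RU U :=
    fun hp hq => hclos w 1 hw h1U hw1 hw1' hp hq
  have Cuv : ∀ {p q : ℂ}, p ∈ RU U → q ∈ RU U → lineInt u v p q ∈ RU U :=
    fun hp hq => hclos u v hu hv huv huv' hp hq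
  have Cvu : ∀ {p q : ℂ}, p ∈ RU U → q ∈ RU U → lineInt v u p q ∈ RU U :=
    fun hp hq => hclos v u hv hu (Ne.symm huv) (nify huv') hp hq
  have Cuw : ∀ {p q : ℂ}, p ∈ RU U → q ∈ RU U → lineInt u w p q ∈ RU U :=
    fun hp hq => hclos u w hu hw huw huw' hp hq
  have Cwu : ∀ {p q : ℂ}, p ∈ RU U → q ∈ RU U → lineInt w u p q ∈ RU U :=
    fun hp hq => hclos w u hw hu (Ne.symm huw) (nify huw') hp hq
  have Cvw : ∀ {p q : ℂ}, p ∈ RU U → q ∈ RU U → lineInt v w p q ∈ RU U :=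
    fun hp hq => hclos v w hv hw hvw hvw' hp hq
  have Cwv : ∀ {p q : ℂ}, p ∈ RU U → q ∈ RU U → lineInt w v p q ∈ RU U :=
    fun hp hq => hclos w v hw hv (Ne.symm hvw) (nify hvw') hp hq
  have haddRU : ∀ {p q : ℂ}, p ∈ RU U → q ∈ RU U → p + q ∈ RU U := by
    intro p q hp hq
    rw [← aux_add_constr p q B1u B1v Buv]
    exact C1u (Cvu (C1u hp h0RU) (C1v hq h0RU)) (Cv1 (Cu1 hp h0RU) (Cuv hq h0RU))
  have hnegRU : ∀ {p : ℂ}, p ∈ RU U → -p ∈ RU U := by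
    intro p hp
    rw [← aux_neg_constr p B1u B1v Buv]
    exact C1u (Cvu (Cu1 hp h0RU) (Cv1 hp h0RU)) (Cv1 (C1u hp h0RU) (Cvu hp h0RU))
  -- the three real multipliers
  set τ₁ := lineInt 1 w 0 (lineInt u v 0 1) with hτ₁def
  set τ₂ := lineInt 1 v 0 (lineInt u w 0 1) with hτ₂def
  set τ₃ := lineInt 1 u 0 (lineInt v w 0 1) with hτ₃def
  have ht1 : ((τ₁.re : ℝ) : ℂ) = τ₁ := Complex.conj_eq_iff_re.mp (aux_tau_real u v w)
  have ht2 : ((τ₂.re : ℝ) : ℂ) = τ₂ := Complex.conj_eq_iff_re.mp (aux_tau_real u w v)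
  have ht3 : ((τ₃.re : ℝ) : ℂ) = τ₃ := Complex.conj_eq_iff_re.mp (aux_tau_real v w u)
  have hprod : τ₁ * τ₂ = 1 := by
    rw [hτ₁def, hτ₂def, aux_tau_val, aux_tau_val]
    field_simp
  have hne1 : τ₁ ≠ 1 := by
    rw [hτ₁def, aux_tau_val]
    intro h
    have h' : brkt v 1 * brkt w u = brkt v u * brkt w 1 := by
      field_simp at h
      linear_combination h
    have hkey : brkt v w * brkt u 1 = 0 := by
      simp only [brkt] at h' ⊢
      linear_combination -h'
    exact (mul_ne_zero Bvw Bu1) hkey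
  have hhalf : τ₁ = -1 → τ₃ = 1/2 := by
    rw [hτ₁def, hτ₃def, aux_tau_val, aux_tau_val]
    intro h
    have h' : brkt v 1 * brkt w u + brkt v u * brkt w 1 = 0 := by
      field_simp at h
      linear_combination h
    rw [div_mul_eq_mul_div, div_div, div_eq_div_iff (mul_ne_zero Bwv Bu1) (two_ne_zero)]
    simp only [brkt] at h' ⊢
    linear_combination -h'
  -- one of the three multipliers is not an integer
  have hex : ∃ ρ ∈ ({τ₁.re, τ₂.re, τ₃.re} : Set ℝ), ∀ n : ℤ, ρ ≠ (n : ℝ) := by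
    by_contra hcon
    push_neg at hcon
    obtain ⟨n₁, hn₁⟩ := hcon τ₁.re (by simp)
    obtain ⟨n₂, hn₂⟩ := hcon τ₂.re (by simp)
    obtain ⟨n₃, hn₃⟩ := hcon τ₃.re (by simp)
    have hr : τ₁.re * τ₂.re = 1 := by
      have hc : ((τ₁.re * τ₂.re : ℝ) : ℂ) = ((1:ℝ):ℂ) := by
        push_cast
        rw [ht1, ht2, hprod]
        try norm_num
      exact_mod_cast hc
    have hz : n₁ * n₂ = 1 := by
      have : ((n₁ * n₂ : ℤ) : ℝ) = ((1:ℤ) : ℝ) := by push_cast; rw [← hn₁, ← hn₂]; exact hr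
      exact_mod_cast this
    rcases Int.mul_eq_one_iff_eq_one_or_neg_one.mp hz with ⟨h₁, _⟩ | ⟨h₁, _⟩
    · apply hne1
      rw [← ht1, hn₁, h₁]
      try norm_num
    · have hτm1 : τ₁ = -1 := by
        rw [← ht1, hn₁, h₁]
        try norm_num
      have h3 : τ₃ = 1/2 := hhalf hτm1
      have h3r : (n₃ : ℝ) = 1/2 := by
        rw [← hn₃]
        have : τ₃.re = (1/2 : ℂ).re := by rw [h3]
        simpa using this
      have h2n : (2 * n₃ : ℤ) = 1 := by
        have : ((2 * n₃ : ℤ) : ℝ) = ((1:ℤ):ℝ) := by push_cast; linarith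
        exact_mod_cast this
      omega
  -- multiplier action on real points of RU
  have hmulgen : ∀ ρ ∈ ({τ₁.re, τ₂.re, τ₃.re} : Set ℝ), ∀ k : ℝ,
      ((k : ℝ) : ℂ) ∈ RU U → ((ρ * k : ℝ) : ℂ) ∈ RU U := by
    intro ρ hρ k hk
    rcases hρ with h | h | h
    · have hval : ((ρ * k : ℝ) : ℂ) = lineInt 1 w 0 (lineInt u v 0 ((k:ℝ):ℂ)) := by
        rw [aux_chain_smul u v w k, ← hτ₁def]
        push_cast
        rw [h, ht1]; ring
      rw [hval]; exact C1w h0RU (Cuv h0RU hk)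
    · have hval : ((ρ * k : ℝ) : ℂ) = lineInt 1 v 0 (lineInt u w 0 ((k:ℝ):ℂ)) := by
        rw [aux_chain_smul u w v k, ← hτ₂def]
        push_cast
        rw [h, ht2]; ring
      rw [hval]; exact C1v h0RU (Cuw h0RU hk)
    · have hval : ((ρ * k : ℝ) : ℂ) = lineInt 1 u 0 (lineInt v w 0 ((k:ℝ):ℂ)) := by
        rw [aux_chain_smul v w u k, ← hτ₃def]
        push_cast
        rw [h, ht3]; ring
      rw [hval]; exact C1u h0RU (Cvw h0RU hk)
  have hK : ∀ d ∈ Subring.closure ({τ₁.re, τ₂.re, τ₃.re} : Set ℝ), ∀ k : ℝ,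
      ((k : ℝ) : ℂ) ∈ RU U → ((d * k : ℝ) : ℂ) ∈ RU U := by
    intro d hd
    induction hd using Subring.closure_induction with
    | mem y hy => exact hmulgen y hy
    | zero => intro k hk; norm_num; exact h0RU
    | one => intro k hk; simpa using hk
    | add y z hy hz ihy ihz =>
      intro k hk
      rw [show ((y + z) * k : ℝ) = y * k + z * k by ring, Complex.ofReal_add]
      exact haddRU (ihy k hk) (ihz k hk)
    | neg y hy ihy =>
      intro k hk
      rw [show ((-y) * k : ℝ) = -(y * k) by ring, Complex.ofReal_neg]
      exact hnegRU (ihy k hk)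
    | mul y z hy hz ihy ihz =>
      intro k hk
      rw [show ((y * z) * k : ℝ) = y * (z * k) by ring]
      exact ihy (z * k) (ihz k hk)
  -- the non-real point μ
  set μ := lineInt u v 0 1 with hμdef
  have hμsmul : ∀ k : ℝ, ((k:ℝ):ℂ) ∈ RU U → (k : ℂ) * μ ∈ RU U := by
    intro k hk
    have hval : (k : ℂ) * μ = lineInt u v 0 ((k:ℝ):ℂ) := by
      rw [hμdef, ← aux_lineInt_smul u v k 1, mul_one]
    rw [hval]; exact Cuv h0RU hk
  have hμim : μ.im ≠ 0 := by
    intro h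
    have hconj : (starRingEnd ℂ) μ = μ := Complex.conj_eq_iff_im.mpr h
    rw [hμdef, aux_lineInt_zero_p, map_mul, aux_brkt_ratio_conj] at hconj
    have h2 : brkt v 1 / brkt v u * brkt u 1 = 0 := by
      have hb : brkt u 1 = u - (starRingEnd ℂ) u := by simp [brkt]
      rw [hb]
      linear_combination -hconj
    exact (mul_ne_zero (div_ne_zero Bv1 Bvu) Bu1) h2
  -- assemble
  obtain ⟨ρ, hρmem, hρni⟩ := hex
  have hdense := aux_dense_subring (Subring.closure ({τ₁.re, τ₂.re, τ₃.re} : Set ℝ)) ρ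
    (Subring.subset_closure hρmem) hρni
  set B := x.im / μ.im with hB
  set A := x.re - B * μ.re with hA
  obtain ⟨d₁, hd₁D, hd₁⟩ := hdense A (ε/2) (by positivity)
  obtain ⟨d₂, hd₂D, hd₂⟩ := hdense B (ε/(2*(‖μ‖ + 1))) (by positivity)
  have hd₁K : ((d₁:ℝ):ℂ) ∈ RU U := by simpa using hK d₁ hd₁D 1 h1RU
  have hd₂K : ((d₂:ℝ):ℂ) ∈ RU U := by simpa using hK d₂ hd₂D 1 h1RU
  refine ⟨(d₁:ℂ) + (d₂:ℂ) * μ, haddRU hd₁K (hμsmul d₂ hd₂K), ?_⟩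
  have hxAB : x = (A:ℂ) + (B:ℂ) * μ := by
    apply Complex.ext
    · simp [hA, Complex.add_re, Complex.mul_re, Complex.ofReal_re, Complex.ofReal_im]
    · simp only [Complex.add_im, Complex.mul_im, Complex.ofReal_re, Complex.ofReal_im,
        zero_mul, add_zero, zero_add, mul_zero]
      rw [hB]
      field_simp
  have hrw : (d₁:ℂ) + (d₂:ℂ) * μ - x = ((d₁ - A : ℝ):ℂ) + ((d₂ - B : ℝ):ℂ) * μ := by
    rw [hxAB]; push_cast; ring
  rw [hrw]
  have hstep : ‖((d₁ - A : ℝ):ℂ) + ((d₂ - B : ℝ):ℂ) * μ‖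
      ≤ |d₁ - A| + |d₂ - B| * ‖μ‖ := by
    calc ‖((d₁ - A : ℝ):ℂ) + ((d₂ - B : ℝ):ℂ) * μ‖
        ≤ ‖((d₁ - A : ℝ):ℂ)‖ + ‖((d₂ - B : ℝ):ℂ) * μ‖ :=
          norm_add_le _ _
      _ = |d₁ - A| + |d₂ - B| * ‖μ‖ := by
          rw [norm_mul, Complex.norm_real, Complex.norm_real, Real.norm_eq_abs, Real.norm_eq_abs]
  have h2' : |d₂ - B| * ‖μ‖ < ε/2 := by
    calc |d₂ - B| * ‖μ‖ ≤ |d₂ - B| * (‖μ‖ + 1) := by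
          apply mul_le_mul_of_nonneg_left _ (abs_nonneg _)
          linarith
      _ < (ε/(2*(‖μ‖ + 1))) * (‖μ‖ + 1) := by
          apply mul_lt_mul_of_pos_right hd₂ (by positivity)
      _ = ε/2 := by field_simp
  linarith [hstep]
end

section
/- For U = {1, e^{iπ/6}, e^{iπ/4}, e^{iπ/3}}, the set R(U) is a subring of ℂ (it contains 0 and 1 and is closed under addition, negation, and multiplication). -/
open Complex

section basic
variable (α β γ x y p q c d : ℂ)

lemma brkt_anti : brkt α β = - brkt β α := by simp only [brkt]; ring

lemma brkt_conj : (starRingEnd ℂ) (brkt α β) = - brkt α β := by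
  simp only [brkt, map_sub, map_mul, Complex.conj_conj]; ring

lemma brkt_zero_right : brkt α 0 = 0 := by simp [brkt]

lemma brkt_add_right : brkt α (x + y) = brkt α x + brkt α y := by
  simp only [brkt, map_add]; ring

lemma brkt_neg_right : brkt α (-x) = - brkt α x := by
  simp only [brkt, map_neg]; ring

lemma brkt_real_smul (hc : (starRingEnd ℂ) c = c) : brkt α (c * x) = c * brkt α x := by
  simp only [brkt, map_mul, hc]; ring

lemma isReal_ratio (a b e f : ℂ) :
    (starRingEnd ℂ) (brkt a b / brkt e f) = brkt a b / brkt e f := by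
  rw [map_div₀, brkt_conj, brkt_conj, neg_div_neg_eq]

lemma lineInt_zero_left : lineInt α β 0 q = brkt β q / brkt β α * α := by
  rw [lineInt, brkt_zero_right, zero_div, zero_mul, zero_add]

lemma lineInt_zero_right : lineInt α β p 0 = brkt α p / brkt α β * β := by
  rw [lineInt, brkt_zero_right, zero_div, zero_mul, add_zero]

lemma lineInt_self (h : brkt α β ≠ 0) : lineInt α β x x = x := by
  have h2 : brkt β α ≠ 0 := by rw [brkt_anti]; simpa using h
  simp only [lineInt, brkt] at *
  rw [div_mul_eq_mul_div, div_mul_eq_mul_div, div_add_div _ _ h h2, div_eq_iff (mul_ne_zero h h2)]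
  ring

lemma lineInt_smul (hc : (starRingEnd ℂ) c = c) :
    c * lineInt α β p q = lineInt α β (c * p) (c * q) := by
  simp only [lineInt, brkt_real_smul _ _ _ hc]
  ring

lemma lineInt_split : lineInt α β p q = lineInt β α 0 p + lineInt α β 0 q := by
  rw [lineInt, lineInt_zero_left, lineInt_zero_left]

end basic

lemma neg_brkt_ne {a b : ℂ} (h : brkt a b ≠ 0) : brkt b a ≠ 0 := by
  rw [brkt_anti]; simpa using h

lemma isReal_ratio2 (a b e f g h i j : ℂ) :
    (starRingEnd ℂ) (brkt a b / brkt e f * brkt g h / brkt i j)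
      = brkt a b / brkt e f * brkt g h / brkt i j := by
  rw [map_div₀, map_mul, isReal_ratio, brkt_conj, brkt_conj, mul_neg, neg_div_neg_eq]

section keys
variable (α β γ x y : ℂ)

lemma lineInt_scaled (u v : ℂ) {c d : ℂ} (hc : (starRingEnd ℂ) c = c)
    (hd : (starRingEnd ℂ) d = d) (h : brkt u v ≠ 0) :
    lineInt u v (c * v) (d * u) = c * v + d * u := by
  have h' := neg_brkt_ne h
  rw [lineInt, brkt_real_smul u v c hc, brkt_real_smul v u d hd,
      mul_div_assoc, div_self h, mul_one, mul_div_assoc, div_self h', mul_one]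

lemma lineInt_brkt_congr {α β p q p' q' : ℂ} (h1 : brkt α p = brkt α p')
    (h2 : brkt β q = brkt β q') : lineInt α β p q = lineInt α β p' q' := by
  rw [lineInt, lineInt, h1, h2]

lemma keyA_brkt (h1 : brkt α β ≠ 0) (h2 : brkt α γ ≠ 0) (h3 : brkt β γ ≠ 0) :
    brkt α (lineInt β γ (lineInt α γ x 0) (lineInt α β y 0)) = brkt α x + brkt α y := by
  rw [lineInt_zero_right, lineInt_zero_right,
      lineInt_scaled β γ (isReal_ratio α x α γ) (isReal_ratio α y α β) h3,
      brkt_add_right, brkt_real_smul α γ _ (isReal_ratio α x α γ),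
      brkt_real_smul α β _ (isReal_ratio α y α β),
      div_mul_cancel₀ _ h2, div_mul_cancel₀ _ h1]

lemma keyP_brkt (h1 : brkt α β ≠ 0) (h2 : brkt α γ ≠ 0) (h3 : brkt β γ ≠ 0) :
    brkt α (lineInt β γ (lineInt α γ 0 x) (lineInt α β 0 x)) = - brkt α x := by
  have plk : brkt α β * brkt γ x + brkt β γ * brkt α x = brkt α γ * brkt β x := by
    simp only [brkt]; ring
  rw [lineInt_zero_left, lineInt_zero_left, lineInt,
      brkt_real_smul β α _ (isReal_ratio γ x γ α),
      brkt_real_smul γ α _ (isReal_ratio β x β α)]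
  rw [show brkt γ x / brkt γ α * brkt β α / brkt β γ * γ
        = (brkt γ x / brkt γ α * brkt β α / brkt β γ) * γ from by ring,
      show brkt β x / brkt β α * brkt γ α / brkt γ β * β
        = (brkt β x / brkt β α * brkt γ α / brkt γ β) * β from by ring]
  rw [brkt_add_right, brkt_real_smul α γ _ (isReal_ratio2 γ x γ α β α β γ),
      brkt_real_smul α β _ (isReal_ratio2 β x β α γ α γ β)]
  rw [brkt_anti γ α, brkt_anti β α, brkt_anti γ β]
  have h1' : -brkt α β ≠ 0 := by simpa using h1
  have h2' : -brkt α γ ≠ 0 := by simpa using h2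
  have h3' : -brkt β γ ≠ 0 := by simpa using h3
  field_simp
  linear_combination plk
end keys

section keys2
variable (α β γ x y : ℂ)

lemma add_identity (h1 : brkt α β ≠ 0) (h2 : brkt α γ ≠ 0) (h3 : brkt β γ ≠ 0) :
    lineInt α β (lineInt β γ (lineInt α γ x 0) (lineInt α β y 0))
      (lineInt α γ (lineInt β γ x 0) (lineInt β α y 0)) = x + y := by
  have hA : brkt α (lineInt β γ (lineInt α γ x 0) (lineInt α β y 0)) = brkt α (x + y) := by
    rw [keyA_brkt α β γ x y h1 h2 h3, brkt_add_right]
  have hB : brkt β (lineInt α γ (lineInt β γ x 0) (lineInt β α y 0)) = brkt β (x + y) := by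
    rw [keyA_brkt β α γ x y (neg_brkt_ne h1) h3 h2, brkt_add_right]
  rw [lineInt_brkt_congr hA hB, lineInt_self α β _ h1]

lemma neg_identity (h1 : brkt α β ≠ 0) (h2 : brkt α γ ≠ 0) (h3 : brkt β γ ≠ 0) :
    lineInt α β (lineInt β γ (lineInt α γ 0 x) (lineInt α β 0 x))
      (lineInt α γ (lineInt β γ 0 x) (lineInt β α 0 x)) = -x := by
  have hA : brkt α (lineInt β γ (lineInt α γ 0 x) (lineInt α β 0 x)) = brkt α (-x) := by
    rw [keyP_brkt α β γ x h1 h2 h3, brkt_neg_right]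
  have hB : brkt β (lineInt α γ (lineInt β γ 0 x) (lineInt β α 0 x)) = brkt β (-x) := by
    rw [keyP_brkt β α γ x (neg_brkt_ne h1) h3 h2, brkt_neg_right]
  rw [lineInt_brkt_congr hA hB, lineInt_self α β _ h1]

end keys2

noncomputable section numbers

def s2 : ℝ := Real.sqrt 2
def s3 : ℝ := Real.sqrt 3

def v1 : ℂ := ((s3/2 : ℝ) : ℂ) + ((1/2 : ℝ) : ℂ) * Complex.I
def v2 : ℂ := ((s2/2 : ℝ) : ℂ) + ((s2/2 : ℝ) : ℂ) * Complex.I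
def v3 : ℂ := ((1/2 : ℝ) : ℂ) + ((s3/2 : ℝ) : ℂ) * Complex.I

lemma s2_pos : 0 < s2 := Real.sqrt_pos.mpr (by norm_num)
lemma s3_pos : 0 < s3 := Real.sqrt_pos.mpr (by norm_num)
lemma one_lt_s2 : 1 < s2 := by
  rw [show (1:ℝ) = Real.sqrt 1 from (Real.sqrt_one).symm]
  exact Real.sqrt_lt_sqrt (by norm_num) (by norm_num)
lemma one_lt_s3 : 1 < s3 := by
  rw [show (1:ℝ) = Real.sqrt 1 from (Real.sqrt_one).symm]
  exact Real.sqrt_lt_sqrt (by norm_num) (by norm_num)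
lemma s2_sq : ((s2 : ℝ) : ℂ)^2 = 2 := by
  rw [← Complex.ofReal_pow, sq, s2, Real.mul_self_sqrt (by norm_num : (0:ℝ) ≤ 2)]
  norm_num
lemma s3_sq : ((s3 : ℝ) : ℂ)^2 = 3 := by
  rw [← Complex.ofReal_pow, sq, s3, Real.mul_self_sqrt (by norm_num : (0:ℝ) ≤ 3)]
  norm_num

lemma v1_im : v1.im = 1/2 := by simp [v1]
lemma v2_im : v2.im = s2/2 := by simp [v2]
lemma v3_im : v3.im = s3/2 := by simp [v3]
lemma v1_re : v1.re = s3/2 := by simp [v1]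
lemma v2_re : v2.re = s2/2 := by simp [v2]

lemma ne_of_im {z w : ℂ} (h : z.im ≠ w.im) : z ≠ w := fun he => h (by rw [he])
lemma ne_of_re {z w : ℂ} (h : z.re ≠ w.re) : z ≠ w := fun he => h (by rw [he])

lemma one_ne_v1 : (1:ℂ) ≠ v1 := ne_of_im (by simp [v1_im])
lemma one_ne_neg_v1 : (1:ℂ) ≠ -v1 := ne_of_im (by simp [v1_im])
lemma v1_ne_one : v1 ≠ (1:ℂ) := one_ne_v1.symm
lemma v1_ne_neg_one : v1 ≠ -(1:ℂ) := ne_of_im (by simp [v1_im])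
lemma one_ne_v3 : (1:ℂ) ≠ v3 := ne_of_im (by
  rw [show (1:ℂ).im = 0 from rfl, v3_im]
  have := s3_pos; intro h; rw [eq_div_iff] at h <;> linarith)
lemma one_ne_neg_v3 : (1:ℂ) ≠ -v3 := ne_of_im (by
  rw [show (1:ℂ).im = 0 from rfl, Complex.neg_im, v3_im]
  have := s3_pos; intro h; rw [eq_comm, neg_eq_iff_eq_neg, div_eq_iff] at h <;> linarith)
lemma v1_ne_v3 : v1 ≠ v3 := ne_of_im (by
  simp only [v1_im, v3_im]
  have := one_lt_s3; intro h; rw [div_eq_div_iff] at h <;> linarith)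
lemma v1_ne_neg_v3 : v1 ≠ -v3 := ne_of_im (by
  simp only [v3_im, Complex.neg_im, v1_im]
  have := s3_pos; intro h; rw [div_eq_iff] at h <;> linarith)
lemma v2_ne_v1 : v2 ≠ v1 := ne_of_im (by
  simp only [v1_im, v2_im]
  have := one_lt_s2; intro h; rw [div_eq_div_iff] at h <;> linarith)
lemma v2_ne_neg_v1 : v2 ≠ -v1 := ne_of_im (by
  simp only [v1_im, v2_im, Complex.neg_im]
  have := s2_pos; intro h; rw [div_eq_iff] at h <;> linarith)

end numbers

noncomputable section values
open Complex

lemma conj_ofReal' (r : ℝ) : (starRingEnd ℂ) ((r:ℝ):ℂ) = ((r:ℝ):ℂ) := Complex.conj_ofReal r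

lemma B1 : brkt 1 v1 = -Complex.I := by
  simp only [brkt, v1, map_add, map_mul, map_one, Complex.conj_ofReal, Complex.conj_I]
  push_cast; ring

lemma B3 : brkt 1 v3 = -((s3:ℝ):ℂ) * Complex.I := by
  simp only [brkt, v3, map_add, map_mul, map_one, Complex.conj_ofReal, Complex.conj_I]
  push_cast; ring

lemma B13 : brkt v1 v3 = -Complex.I := by
  simp only [brkt, v1, v3, map_add, map_mul, map_one, Complex.conj_ofReal, Complex.conj_I]
  push_cast
  linear_combination (-(Complex.I)/2) * s3_sq

lemma B12 : brkt v1 v2 = -((((s2:ℝ):ℂ)*((s3:ℝ):ℂ) - ((s2:ℝ):ℂ))/2) * Complex.I := by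
  simp only [brkt, v1, v2, map_add, map_mul, map_one, Complex.conj_ofReal, Complex.conj_I]
  push_cast; ring

lemma B1ne : brkt 1 v1 ≠ 0 := by rw [B1]; simpa using Complex.I_ne_zero
lemma s3C_ne : ((s3:ℝ):ℂ) ≠ 0 := by
  rw [Complex.ofReal_ne_zero]; exact ne_of_gt s3_pos
lemma B3ne : brkt 1 v3 ≠ 0 := by
  rw [B3]; exact mul_ne_zero (by simpa using s3C_ne) Complex.I_ne_zero
lemma B13ne : brkt v1 v3 ≠ 0 := by rw [B13]; simpa using Complex.I_ne_zero
lemma B12ne : brkt v1 v2 ≠ 0 := by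
  rw [B12]
  refine mul_ne_zero (neg_ne_zero.mpr (div_ne_zero ?_ two_ne_zero)) Complex.I_ne_zero
  have : ((s2*s3 - s2 : ℝ):ℂ) ≠ 0 := by
    rw [Complex.ofReal_ne_zero]
    nlinarith [s2_pos, one_lt_s3]
  push_cast at this
  convert this using 1

def m1val : ℂ := -((((s3:ℝ):ℂ)+1)/2) * (1+Complex.I)

lemma C1 : lineInt v2 v1 0 1 = m1val := by
  rw [lineInt_zero_left]
  have bv11 : brkt v1 1 = Complex.I := by rw [brkt_anti, B1]; ring
  rw [bv11, B12, div_mul_eq_mul_div, div_eq_iff (by simpa [B12] using B12ne)]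
  simp only [m1val, v2]
  push_cast
  linear_combination (-((Complex.I + Complex.I^2) * ((s2:ℝ):ℂ))/4) * s3_sq

lemma C2 : brkt v3 m1val = -Complex.I := by
  simp only [brkt, m1val, v3, map_add, map_mul, map_one, map_sub, map_div₀, map_neg,
    map_ofNat, Complex.conj_ofReal, Complex.conj_I]
  push_cast
  linear_combination (-(Complex.I)/2) * s3_sq

lemma bv31 : brkt v3 1 = ((s3:ℝ):ℂ) * Complex.I := by rw [brkt_anti, B3]; ring

lemma C2b : lineInt 1 v3 0 m1val = -((s3:ℝ):ℂ)/3 := by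
  rw [lineInt_zero_left, C2, bv31, mul_one,
      div_eq_div_iff (mul_ne_zero s3C_ne Complex.I_ne_zero) (by norm_num : (3:ℂ) ≠ 0)]
  linear_combination Complex.I * s3_sq

lemma bv3v1 : brkt v3 v1 = Complex.I := by rw [brkt_anti, B13]; ring

lemma C3 : lineInt v1 v3 0 1 = ((s3:ℝ):ℂ) * v1 := by
  rw [lineInt_zero_left, bv31, bv3v1, mul_div_assoc, div_self Complex.I_ne_zero, mul_one]

lemma C4 {b : ℂ} (hb : (starRingEnd ℂ) b = b) :
    lineInt 1 v3 0 (b * v1) = b / ((s3:ℝ):ℂ) := by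
  rw [lineInt_zero_left, brkt_real_smul v3 v1 b hb, bv3v1, bv31, mul_one,
      mul_div_mul_right _ _ Complex.I_ne_zero]

lemma C5 : v1^2 = ((s3:ℝ):ℂ) * v1 - 1 := by
  simp only [v1]
  push_cast
  linear_combination (-1/4 : ℂ) * s3_sq + (1/4 : ℂ) * Complex.I_sq

lemma exp_pi6 : Complex.exp ((Real.pi / 6 : ℂ) * Complex.I) = v1 := by
  rw [show (Real.pi / 6 : ℂ) = ((Real.pi/6 : ℝ) : ℂ) by push_cast; ring,
      Complex.exp_mul_I, ← Complex.ofReal_cos, ← Complex.ofReal_sin,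
      Real.cos_pi_div_six, Real.sin_pi_div_six]
  rfl

lemma exp_pi4 : Complex.exp ((Real.pi / 4 : ℂ) * Complex.I) = v2 := by
  rw [show (Real.pi / 4 : ℂ) = ((Real.pi/4 : ℝ) : ℂ) by push_cast; ring,
      Complex.exp_mul_I, ← Complex.ofReal_cos, ← Complex.ofReal_sin,
      Real.cos_pi_div_four, Real.sin_pi_div_four]
  rfl

lemma exp_pi3 : Complex.exp ((Real.pi / 3 : ℂ) * Complex.I) = v3 := by
  rw [show (Real.pi / 3 : ℂ) = ((Real.pi/3 : ℝ) : ℂ) by push_cast; ring,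
      Complex.exp_mul_I, ← Complex.ofReal_cos, ← Complex.ofReal_sin,
      Real.cos_pi_div_three, Real.sin_pi_div_three]
  rfl

end values

noncomputable section closure

def Uset : Set ℂ := {1, v1, v2, v3}

lemma mem_one : (1:ℂ) ∈ Uset := by left; rfl
lemma mem_v1 : v1 ∈ Uset := by right; left; rfl
lemma mem_v2 : v2 ∈ Uset := by right; right; left; rfl
lemma mem_v3 : v3 ∈ Uset := by right; right; right; rfl

lemma stepSet_succ (n : ℕ) : stepSet Uset n ⊆ stepSet Uset (n+1) := by
  intro z hz
  exact ⟨1, mem_one, v1, mem_v1, one_ne_v1, one_ne_neg_v1, z, hz, z, hz,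
    (lineInt_self 1 v1 z B1ne).symm⟩

lemma stepSet_le {m n : ℕ} (h : m ≤ n) : stepSet Uset m ⊆ stepSet Uset n := by
  induction n with
  | zero => rw [Nat.le_zero.mp h]
  | succ n ih =>
    rcases Nat.eq_or_lt_of_le h with rfl | hlt
    · exact subset_rfl
    · exact fun z hz => stepSet_succ n (ih (Nat.lt_succ_iff.mp hlt) hz)

lemma zero_mem_RU : (0:ℂ) ∈ RU Uset := Set.mem_iUnion.mpr ⟨0, by left; rfl⟩
lemma one_mem_RU : (1:ℂ) ∈ RU Uset := Set.mem_iUnion.mpr ⟨0, by right; rfl⟩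

lemma lineInt_mem {α β p q : ℂ} (hα : α ∈ Uset) (hβ : β ∈ Uset) (h1 : α ≠ β)
    (h2 : α ≠ -β) (hp : p ∈ RU Uset) (hq : q ∈ RU Uset) :
    lineInt α β p q ∈ RU Uset := by
  obtain ⟨m, hm⟩ := Set.mem_iUnion.mp hp
  obtain ⟨n, hn⟩ := Set.mem_iUnion.mp hq
  exact Set.mem_iUnion.mpr ⟨max m n + 1, α, hα, β, hβ, h1, h2,
    p, stepSet_le (le_max_left m n) hm, q, stepSet_le (le_max_right m n) hn, rfl⟩

lemma add_mem_RU {x y : ℂ} (hx : x ∈ RU Uset) (hy : y ∈ RU Uset) :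
    x + y ∈ RU Uset := by
  rw [← add_identity 1 v1 v3 x y B1ne B3ne B13ne]
  exact lineInt_mem mem_one mem_v1 one_ne_v1 one_ne_neg_v1
    (lineInt_mem mem_v1 mem_v3 v1_ne_v3 v1_ne_neg_v3
      (lineInt_mem mem_one mem_v3 one_ne_v3 one_ne_neg_v3 hx zero_mem_RU)
      (lineInt_mem mem_one mem_v1 one_ne_v1 one_ne_neg_v1 hy zero_mem_RU))
    (lineInt_mem mem_one mem_v3 one_ne_v3 one_ne_neg_v3
      (lineInt_mem mem_v1 mem_v3 v1_ne_v3 v1_ne_neg_v3 hx zero_mem_RU)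
      (lineInt_mem mem_v1 mem_one v1_ne_one v1_ne_neg_one hy zero_mem_RU))

lemma neg_mem_RU {x : ℂ} (hx : x ∈ RU Uset) : -x ∈ RU Uset := by
  rw [← neg_identity 1 v1 v3 x B1ne B3ne B13ne]
  exact lineInt_mem mem_one mem_v1 one_ne_v1 one_ne_neg_v1
    (lineInt_mem mem_v1 mem_v3 v1_ne_v3 v1_ne_neg_v3
      (lineInt_mem mem_one mem_v3 one_ne_v3 one_ne_neg_v3 zero_mem_RU hx)
      (lineInt_mem mem_one mem_v1 one_ne_v1 one_ne_neg_v1 zero_mem_RU hx))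
    (lineInt_mem mem_one mem_v3 one_ne_v3 one_ne_neg_v3
      (lineInt_mem mem_v1 mem_v3 v1_ne_v3 v1_ne_neg_v3 zero_mem_RU hx)
      (lineInt_mem mem_v1 mem_one v1_ne_one v1_ne_neg_one zero_mem_RU hx))

lemma scale_mem_RU {c : ℂ} (hc : (starRingEnd ℂ) c = c) (hm : c ∈ RU Uset) :
    ∀ {z : ℂ}, z ∈ RU Uset → c * z ∈ RU Uset := by
  have main : ∀ n, ∀ z ∈ stepSet Uset n, c * z ∈ RU Uset := by
    intro n
    induction n with
    | zero =>
      rintro z (rfl | rfl)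
      · rw [mul_zero]; exact zero_mem_RU
      · rw [mul_one]; exact hm
    | succ n ih =>
      rintro z ⟨α, hα, β, hβ, h1, h2, p, hp, q, hq, rfl⟩
      rw [lineInt_smul α β p q c hc]
      exact lineInt_mem hα hβ h1 h2 (ih p hp) (ih q hq)
  intro z hz
  obtain ⟨n, hn⟩ := Set.mem_iUnion.mp hz
  exact main n z hn

end closure

noncomputable section mult

lemma conj_s3 : (starRingEnd ℂ) ((s3:ℝ):ℂ) = ((s3:ℝ):ℂ) := Complex.conj_ofReal _

lemma neg_s3_third_mem : (-((s3:ℝ):ℂ)/3) ∈ RU Uset := by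
  have e : lineInt 1 v3 0 (lineInt v2 v1 0 1) = -((s3:ℝ):ℂ)/3 := by rw [C1, C2b]
  rw [← e]
  exact lineInt_mem mem_one mem_v3 one_ne_v3 one_ne_neg_v3 zero_mem_RU
    (lineInt_mem mem_v2 mem_v1 v2_ne_v1 v2_ne_neg_v1 zero_mem_RU one_mem_RU)

lemma s3_third_mem : (((s3:ℝ):ℂ)/3) ∈ RU Uset := by
  rw [show (((s3:ℝ):ℂ)/3) = -(-((s3:ℝ):ℂ)/3) by ring]
  exact neg_mem_RU neg_s3_third_mem

lemma s3_mem : ((s3:ℝ):ℂ) ∈ RU Uset := by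
  rw [show ((s3:ℝ):ℂ) = ((s3:ℝ):ℂ)/3 + (((s3:ℝ):ℂ)/3 + ((s3:ℝ):ℂ)/3) by ring]
  exact add_mem_RU s3_third_mem (add_mem_RU s3_third_mem s3_third_mem)

lemma conj_s3_third : (starRingEnd ℂ) (((s3:ℝ):ℂ)/3) = ((s3:ℝ):ℂ)/3 := by
  rw [map_div₀, conj_s3, map_ofNat]

lemma v1_mem : v1 ∈ RU Uset := by
  have h1 : lineInt v1 v3 0 1 ∈ RU Uset :=
    lineInt_mem mem_v1 mem_v3 v1_ne_v3 v1_ne_neg_v3 zero_mem_RU one_mem_RU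
  rw [C3] at h1
  have h2 := scale_mem_RU conj_s3_third s3_third_mem h1
  rw [show ((s3:ℝ):ℂ)/3 * (((s3:ℝ):ℂ) * v1) = v1 by
    linear_combination (v1/3) * s3_sq] at h2
  exact h2

theorem mul_mem_RU {x y : ℂ} (hx : x ∈ RU Uset) (hy : y ∈ RU Uset) :
    x * y ∈ RU Uset := by
  set a := brkt v1 x / brkt v1 1 with hadef
  set b := brkt 1 x / brkt 1 v1 with hbdef
  set a' := brkt v1 y / brkt v1 1 with hadef'
  set b' := brkt 1 y / brkt 1 v1 with hbdef'
  have hca : (starRingEnd ℂ) a = a := isReal_ratio v1 x v1 1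
  have hcb : (starRingEnd ℂ) b = b := isReal_ratio 1 x 1 v1
  have hca' : (starRingEnd ℂ) a' = a' := isReal_ratio v1 y v1 1
  have hcb' : (starRingEnd ℂ) b' = b' := isReal_ratio 1 y 1 v1
  have hxd : x = b * v1 + a := by
    conv_lhs => rw [← lineInt_self 1 v1 x B1ne]
    rw [lineInt, mul_one]
  have hyd : y = b' * v1 + a' := by
    conv_lhs => rw [← lineInt_self 1 v1 y B1ne]
    rw [lineInt, mul_one]
  -- memberships of a, b, a', b'
  have haR : a ∈ RU Uset := by
    have : lineInt 1 v1 0 x = a := by rw [lineInt_zero_left, mul_one]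
    rw [← this]
    exact lineInt_mem mem_one mem_v1 one_ne_v1 one_ne_neg_v1 zero_mem_RU hx
  have haR' : a' ∈ RU Uset := by
    have : lineInt 1 v1 0 y = a' := by rw [lineInt_zero_left, mul_one]
    rw [← this]
    exact lineInt_mem mem_one mem_v1 one_ne_v1 one_ne_neg_v1 zero_mem_RU hy
  have hbv1 : b * v1 ∈ RU Uset := by
    have : lineInt v1 1 0 x = b * v1 := by rw [lineInt_zero_left]
    rw [← this]
    exact lineInt_mem mem_v1 mem_one v1_ne_one v1_ne_neg_one zero_mem_RU hx
  have hbv1' : b' * v1 ∈ RU Uset := by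
    have : lineInt v1 1 0 y = b' * v1 := by rw [lineInt_zero_left]
    rw [← this]
    exact lineInt_mem mem_v1 mem_one v1_ne_one v1_ne_neg_one zero_mem_RU hy
  have hbR : b ∈ RU Uset := by
    have ht : lineInt 1 v3 0 (b * v1) ∈ RU Uset :=
      lineInt_mem mem_one mem_v3 one_ne_v3 one_ne_neg_v3 zero_mem_RU hbv1
    rw [C4 hcb] at ht
    have h2 := scale_mem_RU conj_s3 s3_mem ht
    rwa [show ((s3:ℝ):ℂ) * (b / ((s3:ℝ):ℂ)) = b from
      mul_div_cancel₀ b s3C_ne] at h2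
  have hbR' : b' ∈ RU Uset := by
    have ht : lineInt 1 v3 0 (b' * v1) ∈ RU Uset :=
      lineInt_mem mem_one mem_v3 one_ne_v3 one_ne_neg_v3 zero_mem_RU hbv1'
    rw [C4 hcb'] at ht
    have h2 := scale_mem_RU conj_s3 s3_mem ht
    rwa [show ((s3:ℝ):ℂ) * (b' / ((s3:ℝ):ℂ)) = b' from
      mul_div_cancel₀ b' s3C_ne] at h2
  -- product identity
  have key : x * y = (a*a' + -(b*b')) + (a*b' + a'*b + ((s3:ℝ):ℂ)*(b*b')) * v1 := by
    rw [hxd, hyd]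
    linear_combination (b*b') * C5
  rw [key]
  have t1 : a*a' ∈ RU Uset := scale_mem_RU hca haR haR'
  have t2 : b*b' ∈ RU Uset := scale_mem_RU hcb hbR hbR'
  have hd : (starRingEnd ℂ) (a*b' + a'*b + ((s3:ℝ):ℂ)*(b*b')) =
      a*b' + a'*b + ((s3:ℝ):ℂ)*(b*b') := by
    simp only [map_add, map_mul, hca, hcb, hca', hcb', conj_s3]
  have hdR : (a*b' + a'*b + ((s3:ℝ):ℂ)*(b*b')) ∈ RU Uset :=
    add_mem_RU (add_mem_RU (scale_mem_RU hca haR hbR') (scale_mem_RU hca' haR' hbR))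
      (scale_mem_RU conj_s3 s3_mem t2)
  exact add_mem_RU (add_mem_RU t1 (neg_mem_RU t2))
    (scale_mem_RU hd hdR v1_mem)

end mult


/-- `R({1, e^{iπ/6}, e^{iπ/4}, e^{iπ/3}})` is a subring of `ℂ`. -/
theorem stmt16 :
    ∃ A : Subring ℂ, (A : Set ℂ) =
      RU {1, Complex.exp ((Real.pi / 6 : ℂ) * Complex.I),
          Complex.exp ((Real.pi / 4 : ℂ) * Complex.I),
          Complex.exp ((Real.pi / 3 : ℂ) * Complex.I)} := by
  refine ⟨{ carrier := RU Uset,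
            zero_mem' := zero_mem_RU,
            one_mem' := one_mem_RU,
            add_mem' := fun hx hy => add_mem_RU hx hy,
            mul_mem' := fun hx hy => mul_mem_RU hx hy,
            neg_mem' := fun hx => neg_mem_RU hx }, ?_⟩
  rw [exp_pi6, exp_pi4, exp_pi3]
  rfl
end
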